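/- Under calibration constraints ∑ᵢ∑ⱼ(Aᵢⱼ/êᵢⱼ)Xᵢⱼ = ∑ᵢ∑ⱼ((1−Aᵢⱼ)/(1−êᵢⱼ))Xᵢⱼ = ∑ᵢ∑ⱼXᵢⱼ and cluster constraints ∑ⱼAᵢⱼ/êᵢⱼ = ∑ⱼ(1−Aᵢⱼ)/(1−êᵢⱼ) = nᵢ, if Yᵢⱼ(a) = βₐᵀXᵢⱼ + μₐ(Uᵢ) for a = 0,1, then the IPTW estimator (1/n)∑ᵢ∑ⱼ{AᵢⱼYᵢⱼ/êᵢⱼ − (1−Aᵢⱼ)Yᵢⱼ/(1−êᵢⱼ)} with Yᵢⱼ = AᵢⱼYᵢⱼ(1)+(1−Aᵢⱼ)Yᵢⱼ(0) equals the exact finite-sample average treatment effect (1/n)∑ᵢ∑ⱼ{Yᵢⱼ(1) − Yᵢⱼ(0)}. -/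

import Mathlib

open Finset

/-- Under sample-level covariate calibration and cluster-level calibration, if
`Yᵢⱼ(a) = βₐᵀXᵢⱼ + μₐ(Uᵢ)` for `a = 0,1`, then the IPTW estimator equals the exact
finite-sample average treatment effect. -/
theorem stmt_10 {m p : ℕ} (n : Fin m → ℕ)
    (X : (i : Fin m) → Fin (n i) → Fin p → ℝ) (U : Fin m → ℝ)
    (A : (i : Fin m) → Fin (n i) → ℝ) (hA01 : ∀ i j, A i j = 0 ∨ A i j = 1)
    (ehat : (i : Fin m) → Fin (n i) → ℝ) (he : ∀ i j, 0 < ehat i j ∧ ehat i j < 1)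
    (β0 β1 : Fin p → ℝ) (μ0 μ1 : ℝ → ℝ)
    (Y0 Y1 Y : (i : Fin m) → Fin (n i) → ℝ)
    (hY0 : ∀ i j, Y0 i j = (∑ k, β0 k * X i j k) + μ0 (U i))
    (hY1 : ∀ i j, Y1 i j = (∑ k, β1 k * X i j k) + μ1 (U i))
    (hY : ∀ i j, Y i j = A i j * Y1 i j + (1 - A i j) * Y0 i j)
    (hcalX1 : ∑ i, ∑ j, (A i j / ehat i j) • X i j = ∑ i, ∑ j, X i j)
    (hcalX0 : ∑ i, ∑ j, ((1 - A i j) / (1 - ehat i j)) • X i j = ∑ i, ∑ j, X i j)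
    (hcal1 : ∀ i, ∑ j, A i j / ehat i j = (n i : ℝ))
    (hcal0 : ∀ i, ∑ j, (1 - A i j) / (1 - ehat i j) = (n i : ℝ)) :
    (1 / (∑ i, (n i : ℝ))) *
        ∑ i, ∑ j, (A i j * Y i j / ehat i j - (1 - A i j) * Y i j / (1 - ehat i j))
      = (1 / (∑ i, (n i : ℝ))) * ∑ i, ∑ j, (Y1 i j - Y0 i j) := by
  congr 1
  have h1k : ∀ k, ∑ i, ∑ j, (A i j / ehat i j) * X i j k = ∑ i, ∑ j, X i j k := by
    intro k
    have := congrFun hcalX1 k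
    simpa [Finset.sum_apply, Pi.smul_apply, smul_eq_mul] using this
  have h0k : ∀ k, ∑ i, ∑ j, ((1 - A i j) / (1 - ehat i j)) * X i j k = ∑ i, ∑ j, X i j k := by
    intro k
    have := congrFun hcalX0 k
    simpa [Finset.sum_apply, Pi.smul_apply, smul_eq_mul] using this
  have hterm : ∀ i j, A i j * Y i j / ehat i j - (1 - A i j) * Y i j / (1 - ehat i j)
      = ((A i j / ehat i j) * (∑ k, β1 k * X i j k) + (A i j / ehat i j) * μ1 (U i))
        - (((1 - A i j) / (1 - ehat i j)) * (∑ k, β0 k * X i j k)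
            + ((1 - A i j) / (1 - ehat i j)) * μ0 (U i)) := by
    intro i j
    rcases hA01 i j with h | h <;> simp [hY, hY0, hY1, h] <;> ring
  have split : ∀ (w : (i : Fin m) → Fin (n i) → ℝ) (β : Fin p → ℝ) (μ : ℝ → ℝ)
      (hw : ∀ k, ∑ i, ∑ j, w i j * X i j k = ∑ i, ∑ j, X i j k)
      (hn : ∀ i, ∑ j, w i j = (n i : ℝ)),
      ∑ i, ∑ j, (w i j * (∑ k, β k * X i j k) + w i j * μ (U i))
        = (∑ k, β k * ∑ i, ∑ j, X i j k) + ∑ i, (n i : ℝ) * μ (U i) := by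
    intro w β μ hw hn
    rw [Finset.sum_congr rfl fun i _ => Finset.sum_add_distrib, Finset.sum_add_distrib]
    congr 1
    · calc ∑ i, ∑ j, w i j * (∑ k, β k * X i j k)
          = ∑ i, ∑ k, β k * ∑ j, w i j * X i j k := by
            refine Finset.sum_congr rfl fun i _ => ?_
            simp_rw [Finset.mul_sum]
            rw [Finset.sum_comm]
            refine Finset.sum_congr rfl fun k _ => Finset.sum_congr rfl fun j _ => by ring
        _ = ∑ k, β k * ∑ i, ∑ j, w i j * X i j k := by
            rw [Finset.sum_comm]
            simp_rw [Finset.mul_sum]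
        _ = ∑ k, β k * ∑ i, ∑ j, X i j k := by
            exact Finset.sum_congr rfl fun k _ => by rw [hw k]
    · refine Finset.sum_congr rfl fun i _ => ?_
      rw [← Finset.sum_mul, hn i]
  rw [Finset.sum_congr rfl fun i _ => Finset.sum_congr rfl fun j _ => hterm i j]
  rw [Finset.sum_congr rfl fun i _ => Finset.sum_sub_distrib _ _, Finset.sum_sub_distrib,
    split _ _ _ h1k hcal1, split _ _ _ h0k hcal0]
  rw [Finset.sum_congr rfl fun i _ => Finset.sum_congr rfl fun j _ =>
    (by rw [hY1 i j, hY0 i j] : Y1 i j - Y0 i j = _)]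
  rw [Finset.sum_congr rfl fun i _ => Finset.sum_sub_distrib _ _, Finset.sum_sub_distrib]
  have one : ∀ i : Fin m, ∑ j : Fin (n i), (1 : ℝ) = (n i : ℝ) := by simp
  congr 1
  · rw [← split (fun i j => (1:ℝ)) β1 μ1 (by simp) (by simp)]
    exact Finset.sum_congr rfl fun i _ => Finset.sum_congr rfl fun j _ => by ring
  · rw [← split (fun i j => (1:ℝ)) β0 μ0 (by simp) (by simp)]
    exact Finset.sum_congr rfl fun i _ => Finset.sum_congr rfl fun j _ => by ring
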